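/- For every subset A of a countable amenable group G, the upper Banach density d*(A) equals the supremum of λ(A) over all left-invariant means λ on G, and the lower Banach density d_*(A) equals the corresponding infimum; moreover both the supremum and infimum are attained by extreme left-invariant means. -/

import Mathlib

open scoped Classical BoundedContinuousFunction

/-- Left translation `t ↦ g⁻¹ * t` as a continuous map (G discrete). -/
def lTransMap (G : Type*) [Group G] [TopologicalSpace G] [DiscreteTopology G] (g : G) :
    C(G, G) := ⟨fun t => g⁻¹ * t, continuous_of_discreteTopology⟩

/-- The left translation action on ℓ∞(G): `(g · φ)(t) = φ(g⁻¹ t)`. -/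
noncomputable def lTrans (G : Type*) [Group G] [TopologicalSpace G] [DiscreteTopology G]
    (g : G) (f : G →ᵇ ℝ) : G →ᵇ ℝ := f.compContinuous (lTransMap G g)

/-- A mean on G: a positive unital linear functional on ℓ∞(G). -/
def IsMean (G : Type*) [Group G] [TopologicalSpace G] [DiscreteTopology G]
    (m : (G →ᵇ ℝ) →ₗ[ℝ] ℝ) : Prop :=
  m 1 = 1 ∧ ∀ f : G →ᵇ ℝ, 0 ≤ f → 0 ≤ m f

/-- A left-invariant mean on G. -/
def IsLeftInvariantMean (G : Type*) [Group G] [TopologicalSpace G] [DiscreteTopology G]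
    (m : (G →ᵇ ℝ) →ₗ[ℝ] ℝ) : Prop :=
  IsMean G m ∧ ∀ (g : G) (f : G →ᵇ ℝ), m (lTrans G g f) = m f

/-- The indicator function of a set, as an element of ℓ∞(G). -/
noncomputable def indBCF (G : Type*) [Group G] [TopologicalSpace G] [DiscreteTopology G]
    (A : Set G) : G →ᵇ ℝ :=
  BoundedContinuousFunction.ofNormedAddCommGroup (Set.indicator A 1)
    continuous_of_discreteTopology 1 (by
      intro x
      by_cases h : x ∈ A <;> simp [Set.indicator_apply, h])

open Filter

/-- A (left) Følner sequence of finite subsets of `G`. -/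
def IsFolner {G : Type*} [Group G] [DecidableEq G] (F : ℕ → Finset G) : Prop :=
  (∀ n, (F n).Nonempty) ∧
  ∀ g : G,
    Tendsto
      (fun n => ((symmDiff ((F n).image fun t => g * t) (F n)).card : ℝ) / ((F n).card : ℝ))
      atTop (nhds 0)

/-- The upper asymptotic density of `A` along the sequence `F`. -/
noncomputable def upperDensityAlong {G : Type*} [Group G] (F : ℕ → Finset G) (A : Set G) :
    ℝ :=
  limsup (fun n => (((F n).filter fun x => x ∈ A).card : ℝ) / ((F n).card : ℝ)) atTop

/-- The lower asymptotic density of `A` along the sequence `F`. -/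
noncomputable def lowerDensityAlong {G : Type*} [Group G] (F : ℕ → Finset G) (A : Set G) :
    ℝ :=
  liminf (fun n => (((F n).filter fun x => x ∈ A).card : ℝ) / ((F n).card : ℝ)) atTop

-- ============ auxiliary lemmas ============
set_option linter.unusedSectionVars false
section Aux
variable {G : Type*} [Group G] [DecidableEq G] [TopologicalSpace G] [DiscreteTopology G]

lemma lTrans_apply (g : G) (f : G →ᵇ ℝ) (x : G) : lTrans G g f x = f (g⁻¹ * x) := rfl

lemma indBCF_apply (A : Set G) (x : G) : indBCF G A x = if x ∈ A then 1 else 0 := by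
  simp [indBCF, Set.indicator_apply]

lemma bcf_le_iff {f g : G →ᵇ ℝ} : f ≤ g ↔ ∀ x, f x ≤ g x := Iff.rfl

/-- the density sequence of `A` along `F`. -/
noncomputable def densSeq (F : ℕ → Finset G) (A : Set G) (n : ℕ) : ℝ :=
  (((F n).filter fun x => x ∈ A).card : ℝ) / ((F n).card : ℝ)

lemma densSeq_mem_Icc {F : ℕ → Finset G} (hF : ∀ n, (F n).Nonempty) (A : Set G) (n : ℕ) :
    densSeq F A n ∈ Set.Icc (0:ℝ) 1 := by
  have hc : (0:ℝ) < (F n).card := by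
    exact_mod_cast Finset.card_pos.2 (hF n)
  unfold densSeq
  constructor
  · positivity
  · rw [div_le_one hc]
    exact_mod_cast Finset.card_filter_le _ _

lemma mean_smul_one (m : (G →ᵇ ℝ) →ₗ[ℝ] ℝ) (hm : IsMean G m) (c : ℝ) : m (c • 1) = c := by
  rw [map_smul, hm.1, smul_eq_mul, mul_one]

lemma mean_le_of_le (m : (G →ᵇ ℝ) →ₗ[ℝ] ℝ) (hm : IsMean G m) {f : G →ᵇ ℝ} {c : ℝ}
    (h : ∀ x, f x ≤ c) : m f ≤ c := by
  have h0 : (0:G →ᵇ ℝ) ≤ c • 1 - f := by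
    rw [bcf_le_iff]
    intro x
    simp only [BoundedContinuousFunction.coe_sub, BoundedContinuousFunction.coe_smul,
      BoundedContinuousFunction.coe_one, Pi.sub_apply, Pi.smul_apply, Pi.one_apply,
      BoundedContinuousFunction.coe_zero, Pi.zero_apply, smul_eq_mul, mul_one, sub_nonneg]
    exact h x
  have := hm.2 _ h0
  rw [map_sub, mean_smul_one m hm] at this
  linarith

lemma le_mean_of_le (m : (G →ᵇ ℝ) →ₗ[ℝ] ℝ) (hm : IsMean G m) {f : G →ᵇ ℝ} {c : ℝ}
    (h : ∀ x, c ≤ f x) : c ≤ m f := by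
  have h0 : (0:G →ᵇ ℝ) ≤ f - c • 1 := by
    rw [bcf_le_iff]
    intro x
    simp only [BoundedContinuousFunction.coe_sub, BoundedContinuousFunction.coe_smul,
      BoundedContinuousFunction.coe_one, Pi.sub_apply, Pi.smul_apply, Pi.one_apply,
      BoundedContinuousFunction.coe_zero, Pi.zero_apply, smul_eq_mul, mul_one, sub_nonneg]
    exact h x
  have := hm.2 _ h0
  rw [map_sub, mean_smul_one m hm] at this
  linarith

lemma mean_indBCF_mem_Icc (m : (G →ᵇ ℝ) →ₗ[ℝ] ℝ) (hm : IsMean G m) (A : Set G) :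
    m (indBCF G A) ∈ Set.Icc (0:ℝ) 1 := by
  constructor
  · apply le_mean_of_le m hm
    intro x; rw [indBCF_apply]; split <;> norm_num
  · apply mean_le_of_le m hm
    intro x; rw [indBCF_apply]; split <;> norm_num

end Aux
section Mean
set_option linter.unusedSectionVars false
variable {G : Type*} [Group G] [DecidableEq G] [TopologicalSpace G] [DiscreteTopology G]

/-- averages along a Følner sequence -/
noncomputable def avgFun (F : ℕ → Finset G) (f : G →ᵇ ℝ) (n : ℕ) : ℝ :=
  (∑ t ∈ F n, f t) / ((F n).card : ℝ)

lemma abs_sum_le_card_mul_norm (D : Finset G) (f : G →ᵇ ℝ) :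
    |∑ t ∈ D, f t| ≤ (D.card : ℝ) * ‖f‖ := by
  calc |∑ t ∈ D, f t| ≤ ∑ t ∈ D, |f t| := Finset.abs_sum_le_sum_abs _ _
    _ ≤ ∑ _t ∈ D, ‖f‖ := Finset.sum_le_sum (fun t _ => by
        rw [← Real.norm_eq_abs]; exact f.norm_coe_le_norm t)
    _ = (D.card : ℝ) * ‖f‖ := by rw [Finset.sum_const, nsmul_eq_mul]

lemma abs_sum_sub_sum_le (B C : Finset G) (f : G →ᵇ ℝ) :
    |∑ t ∈ B, f t - ∑ t ∈ C, f t| ≤ ((symmDiff B C).card : ℝ) * ‖f‖ := by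
  have h1 : ∑ t ∈ B, f t - ∑ t ∈ C, f t
      = ∑ t ∈ B \ C, f t - ∑ t ∈ C \ B, f t := by
    have hB : ∑ t ∈ B \ C, f t = ∑ t ∈ B, f t - ∑ t ∈ B ∩ C, f t := by
      rw [← Finset.sdiff_inter_self_left]
      exact Finset.sum_sdiff_eq_sub Finset.inter_subset_left
    have hC : ∑ t ∈ C \ B, f t = ∑ t ∈ C, f t - ∑ t ∈ C ∩ B, f t := by
      rw [← Finset.sdiff_inter_self_left]
      exact Finset.sum_sdiff_eq_sub Finset.inter_subset_left
    rw [hB, hC, Finset.inter_comm]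
    ring
  have hcard : ((symmDiff B C).card : ℝ) = ((B \ C).card : ℝ) + ((C \ B).card : ℝ) := by
    rw [symmDiff_def, Finset.sup_eq_union,
      Finset.card_union_of_disjoint (Finset.sdiff_disjoint.mono_right Finset.sdiff_subset)]
    push_cast; ring
  rw [h1, hcard]
  calc |∑ t ∈ B \ C, f t - ∑ t ∈ C \ B, f t|
      ≤ |∑ t ∈ B \ C, f t| + |∑ t ∈ C \ B, f t| := abs_sub _ _
    _ ≤ ((B \ C).card : ℝ) * ‖f‖ + ((C \ B).card : ℝ) * ‖f‖ := by
        gcongr <;> exact abs_sum_le_card_mul_norm _ _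
    _ = _ := by ring

variable {F : ℕ → Finset G}

lemma avgFun_abs_le (hF : ∀ n, (F n).Nonempty) (f : G →ᵇ ℝ) (n : ℕ) :
    |avgFun F f n| ≤ ‖f‖ := by
  have hc : (0:ℝ) < (F n).card := by exact_mod_cast Finset.card_pos.2 (hF n)
  rw [avgFun, abs_div, abs_of_pos hc, div_le_iff₀ hc]
  calc |∑ t ∈ F n, f t| ≤ ((F n).card : ℝ) * ‖f‖ := abs_sum_le_card_mul_norm _ _
    _ = ‖f‖ * (F n).card := by ring

lemma avgFun_add (f g : G →ᵇ ℝ) :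
    avgFun F (f + g) = avgFun F f + avgFun F g := by
  funext n
  simp only [avgFun, Pi.add_apply, BoundedContinuousFunction.coe_add,
    Finset.sum_add_distrib, add_div]

lemma avgFun_smul (c : ℝ) (f : G →ᵇ ℝ) :
    avgFun F (c • f) = fun n => c * avgFun F f n := by
  funext n
  simp only [avgFun, BoundedContinuousFunction.coe_smul, Pi.smul_apply, smul_eq_mul,
    ← Finset.mul_sum, mul_div_assoc]

lemma avgFun_one (hF : ∀ n, (F n).Nonempty) (n : ℕ) : avgFun F 1 n = 1 := by
  have hc : (0:ℝ) < (F n).card := by exact_mod_cast Finset.card_pos.2 (hF n)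
  simp only [avgFun, BoundedContinuousFunction.coe_one, Pi.one_apply, Finset.sum_const,
    nsmul_eq_mul, mul_one]
  field_simp

lemma avgFun_nonneg {f : G →ᵇ ℝ} (hf : 0 ≤ f) (n : ℕ) : 0 ≤ avgFun F f n := by
  apply div_nonneg _ (Nat.cast_nonneg _)
  exact Finset.sum_nonneg fun t _ => hf t

lemma avgFun_indBCF (A : Set G) (n : ℕ) :
    avgFun F (indBCF G A) n = densSeq F A n := by
  unfold avgFun densSeq
  congr 1
  rw [← Finset.sum_boole]
  apply Finset.sum_congr rfl
  intro t _
  rw [indBCF_apply]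

lemma avgFun_lTrans_sub (g : G) (f : G →ᵇ ℝ) (n : ℕ) :
    |avgFun F (lTrans G g f) n - avgFun F f n|
      ≤ ‖f‖ * (((symmDiff ((F n).image fun t => g⁻¹ * t) (F n)).card : ℝ) / ((F n).card : ℝ)) := by
  have hinj : Function.Injective fun t : G => g⁻¹ * t := fun a b h => by
    simpa using mul_left_cancel h
  have hsum : ∑ t ∈ F n, (lTrans G g f) t = ∑ s ∈ (F n).image fun t => g⁻¹ * t, f s := by
    rw [Finset.sum_image (fun a _ b _ h => hinj h)]
    rfl
  rcases Nat.eq_zero_or_pos (F n).card with h0 | hpos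
  · simp [avgFun, h0]
  have hc : (0:ℝ) < (F n).card := by exact_mod_cast hpos
  rw [avgFun, avgFun, hsum, div_sub_div_same, abs_div, abs_of_pos hc,
    div_le_iff₀ hc]
  calc |∑ s ∈ (F n).image (fun t => g⁻¹ * t), f s - ∑ t ∈ F n, f t|
      ≤ ((symmDiff ((F n).image fun t => g⁻¹ * t) (F n)).card : ℝ) * ‖f‖ :=
        abs_sum_sub_sum_le _ _ _
    _ = ‖f‖ * (((symmDiff ((F n).image fun t => g⁻¹ * t) (F n)).card : ℝ) / ((F n).card : ℝ)) * (F n).card := by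
        field_simp

/-- Ultrafilter-limit invariant mean from a Følner sequence. -/
theorem exists_mean_of_folner (hF : IsFolner F) (U : Ultrafilter ℕ) (hU : (U : Filter ℕ) ≤ atTop) :
    ∃ m : (G →ᵇ ℝ) →ₗ[ℝ] ℝ, IsLeftInvariantMean G m ∧
      ∀ f : G →ᵇ ℝ, Tendsto (avgFun F f) (U : Filter ℕ) (nhds (m f)) := by
  have hex : ∀ f : G →ᵇ ℝ, ∃ L : ℝ, Tendsto (avgFun F f) (U : Filter ℕ) (nhds L) := by
    intro f
    have hmem : (U : Filter ℕ).map (avgFun F f) ≤ Filter.principal (Set.Icc (-‖f‖) ‖f‖) := by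
      rw [Filter.le_principal_iff]
      apply Filter.mem_map.2
      apply Filter.univ_mem'
      intro n
      have := avgFun_abs_le hF.1 f n
      exact abs_le.1 this
    obtain ⟨L, _, hL⟩ := (isCompact_Icc (a := -‖f‖) (b := ‖f‖)).ultrafilter_le_nhds
      (U.map (avgFun F f)) (by exact_mod_cast hmem)
    exact ⟨L, hL⟩
  choose mf hmf using hex
  have hadd : ∀ f g : G →ᵇ ℝ, mf (f + g) = mf f + mf g := by
    intro f g
    have h1 : Tendsto (avgFun F (f + g)) (U : Filter ℕ) (nhds (mf f + mf g)) := by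
      rw [avgFun_add]
      exact (hmf f).add (hmf g)
    exact tendsto_nhds_unique (hmf (f + g)) h1
  have hsmul : ∀ (c : ℝ) (f : G →ᵇ ℝ), mf (c • f) = c * mf f := by
    intro c f
    have h1 : Tendsto (avgFun F (c • f)) (U : Filter ℕ) (nhds (c * mf f)) := by
      rw [avgFun_smul]
      exact (hmf f).const_mul c
    exact tendsto_nhds_unique (hmf (c • f)) h1
  refine ⟨⟨⟨mf, hadd⟩, by simpa using hsmul⟩, ⟨⟨?_, ?_⟩, ?_⟩, hmf⟩
  · -- m 1 = 1
    have h1 : Tendsto (avgFun F 1) (U : Filter ℕ) (nhds 1) := by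
      have : avgFun F (1 : G →ᵇ ℝ) = fun _ => (1:ℝ) := funext (avgFun_one hF.1)
      rw [this]; exact tendsto_const_nhds
    exact tendsto_nhds_unique (hmf 1) h1
  · -- positivity
    intro f hf
    exact ge_of_tendsto' (hmf f) (avgFun_nonneg hf)
  · -- invariance
    intro g f
    have hzero : Tendsto (fun n => avgFun F (lTrans G g f) n - avgFun F f n)
        (U : Filter ℕ) (nhds 0) := by
      apply squeeze_zero_norm (avgFun_lTrans_sub g f)
      have := (hF.2 g⁻¹).const_mul ‖f‖
      rw [mul_zero] at this
      exact this.mono_left hU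
    have h1 : Tendsto (avgFun F (lTrans G g f)) (U : Filter ℕ) (nhds (mf f)) := by
      have := hzero.add (hmf f)
      simpa using this
    exact tendsto_nhds_unique (hmf (lTrans G g f)) h1

end Mean
section Cluster
open Filter

/-- an ultrafilter finer than `atTop` along which a bounded sequence converges to its limsup. -/
lemma exists_ultrafilter_tendsto_limsup {u : ℕ → ℝ} (h0 : ∀ n, 0 ≤ u n) (h1 : ∀ n, u n ≤ 1) :
    ∃ U : Ultrafilter ℕ, (U : Filter ℕ) ≤ atTop ∧
      Tendsto u (U : Filter ℕ) (nhds (limsup u atTop)) := by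
  set d := limsup u atTop with hd
  have hbdd : IsBoundedUnder (· ≤ ·) atTop u := isBoundedUnder_of ⟨1, h1⟩
  have hcobdd : IsCoboundedUnder (· ≤ ·) atTop u :=
    Filter.isCoboundedUnder_le_of_le atTop h0
  have hfreq : ∀ ε : ℝ, 0 < ε → ∃ᶠ n in atTop, u n ∈ Metric.ball d ε := by
    intro ε hε
    have h2 : ∀ᶠ n in atTop, u n < d + ε :=
      eventually_lt_of_limsup_lt (by linarith) hbdd
    have h3 : ∃ᶠ n in atTop, d - ε < u n :=
      frequently_lt_of_lt_limsup hcobdd (by rw [← hd]; linarith)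
    refine (h3.and_eventually h2).mono ?_
    rintro n ⟨hn1, hn2⟩
    rw [Metric.mem_ball, Real.dist_eq, abs_lt]
    constructor <;> linarith
  have hne : (atTop ⊓ Filter.comap u (nhds d)).NeBot := by
    rw [Filter.HasBasis.inf_basis_neBot_iff atTop_basis ((Metric.nhds_basis_ball).comap u)]
    rintro N - ε hε
    obtain ⟨n, hn⟩ := ((hfreq ε hε).and_eventually (eventually_ge_atTop N)).exists
    exact ⟨n, hn.2, hn.1⟩
  obtain ⟨U, hU⟩ := Filter.exists_ultrafilter_le (atTop ⊓ Filter.comap u (nhds d))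
  exact ⟨U, hU.trans inf_le_left, Filter.tendsto_iff_comap.2 (hU.trans inf_le_right)⟩

/-- an ultrafilter finer than `atTop` along which a bounded sequence converges to its liminf. -/
lemma exists_ultrafilter_tendsto_liminf {u : ℕ → ℝ} (h0 : ∀ n, 0 ≤ u n) (h1 : ∀ n, u n ≤ 1) :
    ∃ U : Ultrafilter ℕ, (U : Filter ℕ) ≤ atTop ∧
      Tendsto u (U : Filter ℕ) (nhds (liminf u atTop)) := by
  set d := liminf u atTop with hd
  have hbdd : IsBoundedUnder (· ≥ ·) atTop u := isBoundedUnder_of ⟨0, h0⟩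
  have hcobdd : IsCoboundedUnder (· ≥ ·) atTop u :=
    Filter.isCoboundedUnder_ge_of_le atTop h1
  have hfreq : ∀ ε : ℝ, 0 < ε → ∃ᶠ n in atTop, u n ∈ Metric.ball d ε := by
    intro ε hε
    have h2 : ∀ᶠ n in atTop, d - ε < u n :=
      eventually_lt_of_lt_liminf (by linarith) hbdd
    have h3 : ∃ᶠ n in atTop, u n < d + ε :=
      frequently_lt_of_liminf_lt hcobdd (by rw [← hd]; linarith)
    refine (h3.and_eventually h2).mono ?_
    rintro n ⟨hn1, hn2⟩
    rw [Metric.mem_ball, Real.dist_eq, abs_lt]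
    constructor <;> linarith
  have hne : (atTop ⊓ Filter.comap u (nhds d)).NeBot := by
    rw [Filter.HasBasis.inf_basis_neBot_iff atTop_basis ((Metric.nhds_basis_ball).comap u)]
    rintro N - ε hε
    obtain ⟨n, hn⟩ := ((hfreq ε hε).and_eventually (eventually_ge_atTop N)).exists
    exact ⟨n, hn.2, hn.1⟩
  obtain ⟨U, hU⟩ := Filter.exists_ultrafilter_le (atTop ⊓ Filter.comap u (nhds d))
  exact ⟨U, hU.trans inf_le_left, Filter.tendsto_iff_comap.2 (hU.trans inf_le_right)⟩

end Cluster

section DensityMeans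
set_option linter.unusedSectionVars false
open Filter
variable {G : Type*} [Group G] [DecidableEq G] [TopologicalSpace G] [DiscreteTopology G]
variable {F : ℕ → Finset G}

lemma upperDensityAlong_eq_limsup_densSeq (A : Set G) :
    upperDensityAlong F A = limsup (densSeq F A) atTop := rfl

lemma lowerDensityAlong_eq_liminf_densSeq (A : Set G) :
    lowerDensityAlong F A = liminf (densSeq F A) atTop := rfl

theorem exists_mean_eq_upperDensity (hF : IsFolner F) (A : Set G) :
    ∃ m : (G →ᵇ ℝ) →ₗ[ℝ] ℝ, IsLeftInvariantMean G m ∧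
      m (indBCF G A) = upperDensityAlong F A := by
  obtain ⟨U, hU, hUt⟩ := exists_ultrafilter_tendsto_limsup
    (fun n => (densSeq_mem_Icc hF.1 A n).1) (fun n => (densSeq_mem_Icc hF.1 A n).2)
  obtain ⟨m, hm, hmf⟩ := exists_mean_of_folner hF U hU
  refine ⟨m, hm, ?_⟩
  have h1 : Tendsto (avgFun F (indBCF G A)) (U : Filter ℕ) (nhds (limsup (densSeq F A) atTop)) := by
    have : avgFun F (indBCF G A) = densSeq F A := funext (avgFun_indBCF A)
    rw [this]; exact hUt
  rw [upperDensityAlong_eq_limsup_densSeq]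
  exact tendsto_nhds_unique (hmf (indBCF G A)) h1

theorem exists_mean_eq_lowerDensity (hF : IsFolner F) (A : Set G) :
    ∃ m : (G →ᵇ ℝ) →ₗ[ℝ] ℝ, IsLeftInvariantMean G m ∧
      m (indBCF G A) = lowerDensityAlong F A := by
  obtain ⟨U, hU, hUt⟩ := exists_ultrafilter_tendsto_liminf
    (fun n => (densSeq_mem_Icc hF.1 A n).1) (fun n => (densSeq_mem_Icc hF.1 A n).2)
  obtain ⟨m, hm, hmf⟩ := exists_mean_of_folner hF U hU
  refine ⟨m, hm, ?_⟩
  have h1 : Tendsto (avgFun F (indBCF G A)) (U : Filter ℕ) (nhds (liminf (densSeq F A) atTop)) := by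
    have : avgFun F (indBCF G A) = densSeq F A := funext (avgFun_indBCF A)
    rw [this]; exact hUt
  rw [lowerDensityAlong_eq_liminf_densSeq]
  exact tendsto_nhds_unique (hmf (indBCF G A)) h1

end DensityMeans
section Translate
set_option linter.unusedSectionVars false
open Filter
variable {G : Type*} [Group G] [DecidableEq G] [TopologicalSpace G] [DiscreteTopology G]
variable {F : ℕ → Finset G}

/-- the averaged indicator `x ↦ |F n ∩ A x⁻¹|/|F n|` as a BCF -/
noncomputable def avgInd (F : ℕ → Finset G) (A : Set G) (n : ℕ) : G →ᵇ ℝ :=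
  (((F n).card : ℝ))⁻¹ • ∑ g ∈ F n, lTrans G g⁻¹ (indBCF G A)

lemma avgInd_apply (A : Set G) (n : ℕ) (x : G) :
    avgInd F A n x = (((F n).card : ℝ))⁻¹ * ((F n).filter fun g => g * x ∈ A).card := by
  have h1 : (∑ g ∈ F n, lTrans G g⁻¹ (indBCF G A)) x
      = ∑ g ∈ F n, (lTrans G g⁻¹ (indBCF G A)) x := by
    rw [BoundedContinuousFunction.coe_sum]
    simp
  have h2 : ∀ g : G, (lTrans G g⁻¹ (indBCF G A)) x = if g * x ∈ A then 1 else 0 := by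
    intro g
    rw [lTrans_apply, inv_inv, indBCF_apply]
  simp only [avgInd, BoundedContinuousFunction.coe_smul, Pi.smul_apply, smul_eq_mul]
  rw [h1]
  congr 1
  rw [← Finset.sum_boole]
  exact Finset.sum_congr rfl fun g _ => h2 g

lemma mean_avgInd (m : (G →ᵇ ℝ) →ₗ[ℝ] ℝ) (hm : IsLeftInvariantMean G m)
    (hF : ∀ n, (F n).Nonempty) (A : Set G) (n : ℕ) :
    m (avgInd F A n) = m (indBCF G A) := by
  have hc : ((F n).card : ℝ) ≠ 0 := by
    exact_mod_cast Finset.card_ne_zero_of_mem (hF n).choose_spec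
  rw [avgInd, map_smul, map_sum, smul_eq_mul]
  have : ∀ g ∈ F n, m (lTrans G g⁻¹ (indBCF G A)) = m (indBCF G A) := fun g _ => hm.2 g⁻¹ _
  rw [Finset.sum_congr rfl this, Finset.sum_const, nsmul_eq_mul]
  field_simp

lemma exists_pt_gt (m : (G →ᵇ ℝ) →ₗ[ℝ] ℝ) (hm : IsLeftInvariantMean G m)
    (hF : ∀ n, (F n).Nonempty) (A : Set G) (n : ℕ) :
    ∃ x : G, m (indBCF G A) - 1/(n+1 : ℝ) < avgInd F A n x := by
  by_contra h
  push_neg at h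
  have := mean_le_of_le m hm.1 h
  rw [mean_avgInd m hm hF] at this
  have hpos : (0:ℝ) < 1/(n+1 : ℝ) := by positivity
  linarith

lemma exists_pt_lt (m : (G →ᵇ ℝ) →ₗ[ℝ] ℝ) (hm : IsLeftInvariantMean G m)
    (hF : ∀ n, (F n).Nonempty) (A : Set G) (n : ℕ) :
    ∃ x : G, avgInd F A n x < m (indBCF G A) + 1/(n+1 : ℝ) := by
  by_contra h
  push_neg at h
  have := le_mean_of_le m hm.1 h
  rw [mean_avgInd m hm hF] at this
  have hpos : (0:ℝ) < 1/(n+1 : ℝ) := by positivity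
  linarith

lemma folner_translate (hF : IsFolner F) (x : ℕ → G) :
    IsFolner (fun n => (F n).image fun t => t * x n) := by
  constructor
  · intro n
    exact (hF.1 n).image _
  · intro g
    have key : ∀ n, ((symmDiff (((F n).image fun t => t * x n).image fun t => g * t)
        ((F n).image fun t => t * x n)).card : ℝ) / (((F n).image fun t => t * x n).card : ℝ)
        = ((symmDiff ((F n).image fun t => g * t) (F n)).card : ℝ) / ((F n).card : ℝ) := by
      intro n
      have hinj : Function.Injective fun t : G => t * x n := mul_left_injective (x n)
      have h1 : (((F n).image fun t => t * x n).image fun t => g * t)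
          = ((F n).image fun t => g * t).image fun t => t * x n := by
        rw [Finset.image_image, Finset.image_image]
        congr 1
        funext t
        simp [Function.comp, mul_assoc]
      rw [h1, ← Finset.image_symmDiff _ _ hinj, Finset.card_image_of_injective _ hinj,
        Finset.card_image_of_injective _ hinj]
    have := hF.2 g
    refine Tendsto.congr (fun n => (key n).symm) this
end Translate
section Translate2
set_option linter.unusedSectionVars false
open Filter
variable {G : Type*} [Group G] [DecidableEq G] [TopologicalSpace G] [DiscreteTopology G]
variable {F : ℕ → Finset G}

lemma densSeq_translate (x : ℕ → G) (A : Set G) (n : ℕ) :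
    densSeq (fun k => (F k).image fun t => t * x k) A n = avgInd F A n (x n) := by
  have hinj : Function.Injective fun t : G => t * x n := mul_left_injective (x n)
  unfold densSeq
  rw [avgInd_apply]
  have h1 : (((F n).image fun t => t * x n).filter fun y => y ∈ A)
      = ((F n).filter fun g => g * x n ∈ A).image fun t => t * x n := by
    rw [Finset.filter_image]
  rw [h1, Finset.card_image_of_injective _ hinj, Finset.card_image_of_injective _ hinj,
    inv_mul_eq_div]

lemma one_div_eventually_le {ε : ℝ} (hε : 0 < ε) : ∀ᶠ n : ℕ in atTop, 1/(n+1 : ℝ) ≤ ε := by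
  have h := tendsto_one_div_add_atTop_nhds_zero_nat (𝕜 := ℝ)
  exact h.eventually (eventually_le_nhds hε)

theorem exists_folner_upperDensity_ge (hF : IsFolner F)
    (m : (G →ᵇ ℝ) →ₗ[ℝ] ℝ) (hm : IsLeftInvariantMean G m) (A : Set G) :
    ∃ F' : ℕ → Finset G, IsFolner F' ∧ m (indBCF G A) ≤ upperDensityAlong F' A := by
  choose x hx using exists_pt_gt m hm hF.1 A
  refine ⟨fun n => (F n).image fun t => t * x n, folner_translate hF x, ?_⟩
  set F' := fun n => (F n).image fun t => t * x n with hF'def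
  have hF' : IsFolner F' := folner_translate hF x
  have hr : ∀ n : ℕ, m (indBCF G A) - 1/((n:ℝ)+1) < densSeq F' A n := by
    intro n
    rw [hF'def, densSeq_translate]
    exact hx n
  have hbdd : ∀ n, densSeq F' A n ∈ Set.Icc (0:ℝ) 1 := densSeq_mem_Icc hF'.1 A
  have hlim : m (indBCF G A) ≤ liminf (densSeq F' A) atTop := by
    apply le_of_forall_pos_le_add
    intro ε hε
    have hev : ∀ᶠ n in atTop, m (indBCF G A) - ε ≤ densSeq F' A n := by
      filter_upwards [one_div_eventually_le hε] with n hn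
      have := hr n
      linarith
    have hco : IsCoboundedUnder (· ≥ ·) atTop (densSeq F' A) :=
      isCoboundedUnder_ge_of_le atTop (fun n => (hbdd n).2)
    have := le_liminf_of_le hco hev
    linarith
  calc m (indBCF G A) ≤ liminf (densSeq F' A) atTop := hlim
    _ ≤ limsup (densSeq F' A) atTop :=
        liminf_le_limsup (isBoundedUnder_of ⟨1, fun n => (hbdd n).2⟩)
          (isBoundedUnder_of ⟨0, fun n => (hbdd n).1⟩)
    _ = upperDensityAlong F' A := rfl

theorem exists_folner_lowerDensity_le (hF : IsFolner F)
    (m : (G →ᵇ ℝ) →ₗ[ℝ] ℝ) (hm : IsLeftInvariantMean G m) (A : Set G) :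
    ∃ F' : ℕ → Finset G, IsFolner F' ∧ lowerDensityAlong F' A ≤ m (indBCF G A) := by
  choose x hx using exists_pt_lt m hm hF.1 A
  refine ⟨fun n => (F n).image fun t => t * x n, folner_translate hF x, ?_⟩
  set F' := fun n => (F n).image fun t => t * x n with hF'def
  have hF' : IsFolner F' := folner_translate hF x
  have hr : ∀ n : ℕ, densSeq F' A n < m (indBCF G A) + 1/((n:ℝ)+1) := by
    intro n
    rw [hF'def, densSeq_translate]
    exact hx n
  have hbdd : ∀ n, densSeq F' A n ∈ Set.Icc (0:ℝ) 1 := densSeq_mem_Icc hF'.1 A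
  have hlim : limsup (densSeq F' A) atTop ≤ m (indBCF G A) := by
    apply le_of_forall_pos_le_add
    intro ε hε
    have hev : ∀ᶠ n in atTop, densSeq F' A n ≤ m (indBCF G A) + ε := by
      filter_upwards [one_div_eventually_le hε] with n hn
      have := hr n
      linarith
    have hco : IsCoboundedUnder (· ≤ ·) atTop (densSeq F' A) :=
      isCoboundedUnder_le_of_le atTop (fun n => (hbdd n).1)
    exact limsup_le_of_le hco hev
  calc lowerDensityAlong F' A = liminf (densSeq F' A) atTop := rfl
    _ ≤ limsup (densSeq F' A) atTop :=
        liminf_le_limsup (isBoundedUnder_of ⟨1, fun n => (hbdd n).2⟩)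
          (isBoundedUnder_of ⟨0, fun n => (hbdd n).1⟩)
    _ ≤ m (indBCF G A) := hlim

end Translate2
section PiSpace
set_option linter.unusedSectionVars false
open Filter
variable (G : Type*) [Group G] [DecidableEq G] [TopologicalSpace G] [DiscreteTopology G]

/-- The set of left-invariant means, as a set of bare functions on `ℓ∞(G)`. -/
def meanFnSet : Set ((G →ᵇ ℝ) → ℝ) :=
  {φ | (∀ f g : G →ᵇ ℝ, φ (f + g) = φ f + φ g) ∧ (∀ (c : ℝ) (f : G →ᵇ ℝ), φ (c • f) = c * φ f) ∧
    φ 1 = 1 ∧ (∀ f : G →ᵇ ℝ, 0 ≤ f → 0 ≤ φ f) ∧ ∀ (g : G) (f : G →ᵇ ℝ), φ (lTrans G g f) = φ f}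

variable {G}

lemma meanFnSet_eq_image :
    meanFnSet G = DFunLike.coe '' {m : (G →ᵇ ℝ) →ₗ[ℝ] ℝ | IsLeftInvariantMean G m} := by
  ext φ
  constructor
  · rintro ⟨h1, h2, h3, h4, h5⟩
    exact ⟨{ toFun := φ, map_add' := h1, map_smul' := fun c f => by simpa using h2 c f },
      ⟨⟨h3, h4⟩, h5⟩, rfl⟩
  · rintro ⟨m, hm, rfl⟩
    exact ⟨fun f g => map_add m f g, fun c f => by rw [map_smul, smul_eq_mul],
      hm.1.1, hm.1.2, hm.2⟩

lemma meanFnSet_isClosed : IsClosed (meanFnSet G) := by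
  have heq : meanFnSet G =
      (⋂ (f : G →ᵇ ℝ), ⋂ (g : G →ᵇ ℝ), {φ : (G →ᵇ ℝ) → ℝ | φ (f + g) = φ f + φ g}) ∩
      ((⋂ (c : ℝ), ⋂ (f : G →ᵇ ℝ), {φ : (G →ᵇ ℝ) → ℝ | φ (c • f) = c * φ f}) ∩
      (({φ : (G →ᵇ ℝ) → ℝ | φ 1 = 1}) ∩
      ((⋂ (f : G →ᵇ ℝ), ⋂ (_ : (0:G →ᵇ ℝ) ≤ f), {φ : (G →ᵇ ℝ) → ℝ | 0 ≤ φ f}) ∩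
      (⋂ (g : G), ⋂ (f : G →ᵇ ℝ), {φ : (G →ᵇ ℝ) → ℝ | φ (lTrans G g f) = φ f})))) := by
    ext φ
    simp only [meanFnSet, Set.mem_setOf_eq, Set.mem_inter_iff, Set.mem_iInter]
  rw [heq]
  refine IsClosed.inter ?_ (IsClosed.inter ?_ (IsClosed.inter ?_ (IsClosed.inter ?_ ?_)))
  · exact isClosed_iInter fun f => isClosed_iInter fun g =>
      isClosed_eq (continuous_apply (f + g)) ((continuous_apply f).add (continuous_apply g))
  · exact isClosed_iInter fun c => isClosed_iInter fun f =>
      isClosed_eq (continuous_apply (c • f)) (continuous_const.mul (continuous_apply f))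
  · exact isClosed_eq (continuous_apply _) continuous_const
  · exact isClosed_iInter fun f => isClosed_iInter fun _ =>
      isClosed_le continuous_const (continuous_apply _)
  · exact isClosed_iInter fun g => isClosed_iInter fun f =>
      isClosed_eq (continuous_apply (lTrans G g f)) (continuous_apply f)

lemma meanFnSet_subset_pi :
    meanFnSet G ⊆ Set.univ.pi fun f : G →ᵇ ℝ => Set.Icc (-‖f‖) ‖f‖ := by
  rintro φ hφ f -
  rw [meanFnSet_eq_image] at hφ
  obtain ⟨m, hm, rfl⟩ := hφ
  constructor
  · apply le_mean_of_le m hm.1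
    intro x
    have := (f.norm_coe_le_norm x)
    rw [Real.norm_eq_abs, abs_le] at this
    exact this.1
  · apply mean_le_of_le m hm.1
    intro x
    have := (f.norm_coe_le_norm x)
    rw [Real.norm_eq_abs, abs_le] at this
    exact this.2

lemma meanFnSet_isCompact : IsCompact (meanFnSet G) :=
  IsCompact.of_isClosed_subset
    (isCompact_univ_pi fun f => isCompact_Icc) meanFnSet_isClosed meanFnSet_subset_pi

private lemma convex_comb_eq {p q u v c : ℝ} (hp : 0 < p) (hq : 0 < q) (hpq : p + q = 1)
    (hu : u ≤ c) (hv : v ≤ c) (h : p * u + q * v = c) : u = c ∧ v = c := by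
  have h1 : c ≤ u := by
    by_contra hlt
    push_neg at hlt
    have hc : p * c + q * c = c := by rw [← add_mul, hpq, one_mul]
    linarith [mul_lt_mul_of_pos_left hlt hp, mul_le_mul_of_nonneg_left hv hq.le]
  have h2 : c ≤ v := by
    by_contra hlt
    push_neg at hlt
    have hc : p * c + q * c = c := by rw [← add_mul, hpq, one_mul]
    linarith [mul_lt_mul_of_pos_left hlt hq, mul_le_mul_of_nonneg_left hu hp.le]
  exact ⟨le_antisymm hu h1, le_antisymm hv h2⟩

private lemma convex_comb_eq' {p q u v c : ℝ} (hp : 0 < p) (hq : 0 < q) (hpq : p + q = 1)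
    (hu : c ≤ u) (hv : c ≤ v) (h : p * u + q * v = c) : u = c ∧ v = c := by
  have h1 : u ≤ c := by
    by_contra hlt
    push_neg at hlt
    have hc : p * c + q * c = c := by rw [← add_mul, hpq, one_mul]
    linarith [mul_lt_mul_of_pos_left hlt hp, mul_le_mul_of_nonneg_left hv hq.le]
  have h2 : v ≤ c := by
    by_contra hlt
    push_neg at hlt
    have hc : p * c + q * c = c := by rw [← add_mul, hpq, one_mul]
    linarith [mul_lt_mul_of_pos_left hlt hq, mul_le_mul_of_nonneg_left hu hp.le]
  exact ⟨le_antisymm h1 hu, le_antisymm h2 hv⟩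

lemma exists_extreme_isGreatest (hne : (meanFnSet G).Nonempty) (b : G →ᵇ ℝ) :
    ∃ φ ∈ Set.extremePoints ℝ (meanFnSet G),
      IsGreatest ((fun ψ : (G →ᵇ ℝ) → ℝ => ψ b) '' meanFnSet G) (φ b) := by
  obtain ⟨φ₀, hφ₀, hmax⟩ := meanFnSet_isCompact.exists_isMaxOn hne
    ((continuous_apply b).continuousOn)
  set c := φ₀ b with hc
  set T : Set ((G →ᵇ ℝ) → ℝ) := meanFnSet G ∩ {ψ | ψ b = c} with hT
  have hText : IsExtreme ℝ (meanFnSet G) T := by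
    constructor
    · exact Set.inter_subset_left
    · rintro x₁ hx₁ x₂ hx₂ x ⟨hxS, hxb⟩ hseg
      obtain ⟨p, q, hp, hq, hpq, hx⟩ := hseg
      have hxb' : p * x₁ b + q * x₂ b = c := by
        have h' := congrFun hx b
        simp only [Pi.add_apply, Pi.smul_apply, smul_eq_mul] at h'
        rw [show x b = c from hxb] at h'
        exact h'
      have hu : x₁ b ≤ c := hmax hx₁
      have hv : x₂ b ≤ c := hmax hx₂
      obtain ⟨h1, h2⟩ := convex_comb_eq hp hq hpq hu hv hxb'
      exact ⟨hx₁, h1⟩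
  have hTcomp : IsCompact T :=
    meanFnSet_isCompact.inter_right (isClosed_eq (continuous_apply b) continuous_const)
  obtain ⟨ψ, hψ⟩ := hTcomp.extremePoints_nonempty ⟨φ₀, hφ₀, rfl⟩
  refine ⟨ψ, hText.extremePoints_subset_extremePoints hψ, ?_⟩
  have hψb : ψ b = c := (hψ.1 : ψ ∈ T).2
  rw [hψb]
  exact ⟨⟨φ₀, hφ₀, rfl⟩, by rintro y ⟨χ, hχ, rfl⟩; exact hmax hχ⟩

lemma exists_extreme_isLeast (hne : (meanFnSet G).Nonempty) (b : G →ᵇ ℝ) :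
    ∃ φ ∈ Set.extremePoints ℝ (meanFnSet G),
      IsLeast ((fun ψ : (G →ᵇ ℝ) → ℝ => ψ b) '' meanFnSet G) (φ b) := by
  obtain ⟨φ₀, hφ₀, hmin⟩ := meanFnSet_isCompact.exists_isMinOn hne
    ((continuous_apply b).continuousOn)
  set c := φ₀ b with hc
  set T : Set ((G →ᵇ ℝ) → ℝ) := meanFnSet G ∩ {ψ | ψ b = c} with hT
  have hText : IsExtreme ℝ (meanFnSet G) T := by
    constructor
    · exact Set.inter_subset_left
    · rintro x₁ hx₁ x₂ hx₂ x ⟨hxS, hxb⟩ hseg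
      obtain ⟨p, q, hp, hq, hpq, hx⟩ := hseg
      have hxb' : p * x₁ b + q * x₂ b = c := by
        have h' := congrFun hx b
        simp only [Pi.add_apply, Pi.smul_apply, smul_eq_mul] at h'
        rw [show x b = c from hxb] at h'
        exact h'
      have hu : c ≤ x₁ b := hmin hx₁
      have hv : c ≤ x₂ b := hmin hx₂
      obtain ⟨h1, h2⟩ := convex_comb_eq' hp hq hpq hu hv hxb'
      exact ⟨hx₁, h1⟩
  have hTcomp : IsCompact T :=
    meanFnSet_isCompact.inter_right (isClosed_eq (continuous_apply b) continuous_const)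
  obtain ⟨ψ, hψ⟩ := hTcomp.extremePoints_nonempty ⟨φ₀, hφ₀, rfl⟩
  refine ⟨ψ, hText.extremePoints_subset_extremePoints hψ, ?_⟩
  have hψb : ψ b = c := (hψ.1 : ψ ∈ T).2
  rw [hψb]
  exact ⟨⟨φ₀, hφ₀, rfl⟩, by rintro y ⟨χ, hχ, rfl⟩; exact hmin hχ⟩

lemma extreme_transfer {m : (G →ᵇ ℝ) →ₗ[ℝ] ℝ}
    (h : ⇑m ∈ Set.extremePoints ℝ (meanFnSet G)) :
    m ∈ Set.extremePoints ℝ {m : (G →ᵇ ℝ) →ₗ[ℝ] ℝ | IsLeftInvariantMean G m} := by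
  constructor
  · have := h.1
    rw [meanFnSet_eq_image] at this
    obtain ⟨m', hm', heq⟩ := this
    have : m' = m := DFunLike.coe_injective heq
    exact this ▸ hm'
  · intro x₁ hx₁ x₂ hx₂ hseg
    obtain ⟨p, q, hp, hq, hpq, hx⟩ := hseg
    have hcoe : ⇑m ∈ openSegment ℝ (⇑x₁) (⇑x₂) := by
      refine ⟨p, q, hp, hq, hpq, ?_⟩
      rw [← hx]
      funext f
      simp
    have hx₁' : ⇑x₁ ∈ meanFnSet G := by
      rw [meanFnSet_eq_image]; exact ⟨x₁, hx₁, rfl⟩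
    have hx₂' : ⇑x₂ ∈ meanFnSet G := by
      rw [meanFnSet_eq_image]; exact ⟨x₂, hx₂, rfl⟩
    have h1 := h.2 hx₁' hx₂' hcoe
    exact DFunLike.coe_injective h1

end PiSpace


/-- For every subset `A` of a countable amenable group `G`: the upper Banach density
(sup over Følner sequences of upper densities) equals the supremum of `λ(A)` over
left-invariant means `λ`; the lower Banach density equals the corresponding infimum;
and both are attained by extreme left-invariant means. -/
theorem banachDensity_eq_mean_sup_inf {G : Type*} [Group G] [Countable G] [DecidableEq G]
    [TopologicalSpace G] [DiscreteTopology G]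
    (hamen : ∃ F : ℕ → Finset G, IsFolner F) (A : Set G) :
    (sSup {x : ℝ | ∃ F : ℕ → Finset G, IsFolner F ∧ upperDensityAlong F A = x}
        = sSup {x : ℝ | ∃ m : (G →ᵇ ℝ) →ₗ[ℝ] ℝ,
            IsLeftInvariantMean G m ∧ m (indBCF G A) = x}) ∧
    (sInf {x : ℝ | ∃ F : ℕ → Finset G, IsFolner F ∧ lowerDensityAlong F A = x}
        = sInf {x : ℝ | ∃ m : (G →ᵇ ℝ) →ₗ[ℝ] ℝ,
            IsLeftInvariantMean G m ∧ m (indBCF G A) = x}) ∧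
    (∃ m ∈ Set.extremePoints ℝ {m : (G →ᵇ ℝ) →ₗ[ℝ] ℝ | IsLeftInvariantMean G m},
      m (indBCF G A)
        = sSup {x : ℝ | ∃ F : ℕ → Finset G, IsFolner F ∧ upperDensityAlong F A = x}) ∧
    (∃ m ∈ Set.extremePoints ℝ {m : (G →ᵇ ℝ) →ₗ[ℝ] ℝ | IsLeftInvariantMean G m},
      m (indBCF G A)
        = sInf {x : ℝ | ∃ F : ℕ → Finset G, IsFolner F ∧ lowerDensityAlong F A = x}) := by
  obtain ⟨F₀, hF₀⟩ := hamen
  set M : Set ℝ := {x : ℝ | ∃ m : (G →ᵇ ℝ) →ₗ[ℝ] ℝ,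
      IsLeftInvariantMean G m ∧ m (indBCF G A) = x} with hM
  set Dup : Set ℝ := {x : ℝ | ∃ F : ℕ → Finset G, IsFolner F ∧ upperDensityAlong F A = x}
    with hDup
  set Dlow : Set ℝ := {x : ℝ | ∃ F : ℕ → Finset G, IsFolner F ∧ lowerDensityAlong F A = x}
    with hDlow
  -- basic nonemptiness and bounds
  obtain ⟨m₀, hm₀, hm₀A⟩ := exists_mean_eq_upperDensity hF₀ A
  have hMne : M.Nonempty := ⟨m₀ (indBCF G A), m₀, hm₀, rfl⟩
  have hDupne : Dup.Nonempty := ⟨upperDensityAlong F₀ A, F₀, hF₀, rfl⟩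
  have hDlowne : Dlow.Nonempty := ⟨lowerDensityAlong F₀ A, F₀, hF₀, rfl⟩
  have hMbdd : M ⊆ Set.Icc (0:ℝ) 1 := by
    rintro x ⟨m, hm, rfl⟩
    exact mean_indBCF_mem_Icc m hm.1 A
  have hMba : BddAbove M := BddAbove.mono hMbdd (bddAbove_Icc)
  have hMbb : BddBelow M := BddBelow.mono hMbdd (bddBelow_Icc)
  have hDupM : Dup ⊆ M := by
    rintro x ⟨F, hF, rfl⟩
    obtain ⟨m, hm, hmA⟩ := exists_mean_eq_upperDensity hF A
    exact ⟨m, hm, hmA⟩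
  have hDlowM : Dlow ⊆ M := by
    rintro x ⟨F, hF, rfl⟩
    obtain ⟨m, hm, hmA⟩ := exists_mean_eq_lowerDensity hF A
    exact ⟨m, hm, hmA⟩
  have hDupba : BddAbove Dup := BddAbove.mono (hDupM.trans hMbdd) (bddAbove_Icc)
  have hDlowbb : BddBelow Dlow := BddBelow.mono (hDlowM.trans hMbdd) (bddBelow_Icc)
  -- the two sSup / sInf equalities
  have heq1 : sSup Dup = sSup M := by
    apply le_antisymm
    · exact csSup_le_csSup hMba hDupne hDupM
    · apply csSup_le hMne
      rintro a ⟨m, hm, rfl⟩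
      obtain ⟨F', hF', hle⟩ := exists_folner_upperDensity_ge hF₀ m hm A
      exact hle.trans (le_csSup hDupba ⟨F', hF', rfl⟩)
  have heq2 : sInf Dlow = sInf M := by
    apply le_antisymm
    · apply le_csInf hMne
      rintro a ⟨m, hm, rfl⟩
      obtain ⟨F', hF', hle⟩ := exists_folner_lowerDensity_le hF₀ m hm A
      exact (csInf_le hDlowbb ⟨F', hF', rfl⟩).trans hle
    · exact csInf_le_csInf hMbb hDlowne hDlowM
  -- extreme points
  have hSne : (meanFnSet G).Nonempty := by
    rw [meanFnSet_eq_image]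
    exact ⟨⇑m₀, m₀, hm₀, rfl⟩
  have himM : (fun ψ : (G →ᵇ ℝ) → ℝ => ψ (indBCF G A)) '' meanFnSet G = M := by
    rw [meanFnSet_eq_image, hM]
    ext x
    constructor
    · rintro ⟨φ, ⟨m, hm, rfl⟩, rfl⟩
      exact ⟨m, hm, rfl⟩
    · rintro ⟨m, hm, rfl⟩
      exact ⟨⇑m, ⟨m, hm, rfl⟩, rfl⟩
  refine ⟨heq1, heq2, ?_, ?_⟩
  · obtain ⟨φ, hφext, hφgr⟩ := exists_extreme_isGreatest hSne (indBCF G A)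
    have hφS := hφext.1
    rw [meanFnSet_eq_image] at hφS
    obtain ⟨m, hm, hmeq⟩ := hφS
    refine ⟨m, extreme_transfer (hmeq ▸ hφext), ?_⟩
    have : m (indBCF G A) = φ (indBCF G A) := by rw [← hmeq]
    rw [this, heq1, ← himM]
    exact (hφgr.csSup_eq).symm
  · obtain ⟨φ, hφext, hφle⟩ := exists_extreme_isLeast hSne (indBCF G A)
    have hφS := hφext.1
    rw [meanFnSet_eq_image] at hφS
    obtain ⟨m, hm, hmeq⟩ := hφS
    refine ⟨m, extreme_transfer (hmeq ▸ hφext), ?_⟩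
    have : m (indBCF G A) = φ (indBCF G A) := by rw [← hmeq]
    rw [this, heq2, ← himM]
    exact (hφle.csInf_eq).symm
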